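/- Let γ_n > 0 with γ_n → 0 and k_n → ∞ with √{k_n}·γ_n → ∞. Then (γ_n/√{k_n})·e^{-√{k_n}·γ_n}·( ∑_{j=1}^{k_n-1} e^{jγ_n/√{k_n}} − (√{k_n}/γ_n)·e^{√{k_n}·γ_n} ) → 0 as n → ∞. -/

import Mathlib

open Filter Real

theorem sqrt_tendsto_atTop : Tendsto Real.sqrt atTop atTop := by
  have h := tendsto_rpow_atTop (y := (1/2 : ℝ)) (by norm_num)
  refine h.congr' ?_
  exact Eventually.of_forall fun x => (Real.sqrt_eq_rpow x).symm

theorem slope_exp_limit :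
    Tendsto (fun t : ℝ => t / (Real.exp t - 1)) (nhdsWithin 0 {0}ᶜ) (nhds 1) := by
  have h := hasDerivAt_iff_tendsto_slope.mp (Real.hasDerivAt_exp 0)
  rw [Real.exp_zero] at h
  have h2 : Tendsto (fun t : ℝ => (Real.exp t - 1) / t) (nhdsWithin 0 {0}ᶜ) (nhds 1) := by
    refine h.congr ?_
    intro t
    simp [slope_def_field, div_eq_inv_mul]
  have h3 := h2.inv₀ one_ne_zero
  rw [inv_one] at h3
  refine h3.congr fun t => ?_
  rw [inv_div]

open Filter in
theorem geom_sum_leading_term (γ : ℕ → ℝ) (k : ℕ → ℕ)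
    (hγpos : ∀ n, 0 < γ n) (hγ0 : Tendsto γ atTop (nhds 0))
    (hk : Tendsto k atTop atTop)
    (hkγ : Tendsto (fun n => Real.sqrt (k n) * γ n) atTop atTop) :
    Tendsto (fun n => (γ n / Real.sqrt (k n)) * Real.exp (-(Real.sqrt (k n)) * γ n) *
        ((∑ j ∈ Finset.Icc 1 (k n - 1), Real.exp (j * γ n / Real.sqrt (k n))) -
          (Real.sqrt (k n) / γ n) * Real.exp (Real.sqrt (k n) * γ n)))
      atTop (nhds 0) := by
  have hkR : Tendsto (fun n => (k n : ℝ)) atTop atTop :=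
    tendsto_natCast_atTop_atTop.comp hk
  have hsqrt : Tendsto (fun n => Real.sqrt (k n)) atTop atTop :=
    sqrt_tendsto_atTop.comp hkR
  -- x n := γ n / sqrt (k n) tends to 0
  have hx : Tendsto (fun n => γ n / Real.sqrt (k n)) atTop (nhds 0) := by
    have h := hγ0.mul (tendsto_inv_atTop_zero.comp hsqrt)
    simpa [div_eq_mul_inv] using h
  have hk2 : ∀ᶠ n in atTop, 2 ≤ k n := hk.eventually_ge_atTop 2
  have hxpos : ∀ᶠ n in atTop, 0 < γ n / Real.sqrt (k n) := by
    filter_upwards [hk2] with n hn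
    have hkpos : (0:ℝ) < (k n : ℝ) := by exact_mod_cast Nat.lt_of_lt_of_le Nat.zero_lt_two hn
    exact div_pos (hγpos n) (Real.sqrt_pos.mpr hkpos)
  have hxne : Tendsto (fun n => γ n / Real.sqrt (k n)) atTop (nhdsWithin 0 {0}ᶜ) := by
    refine tendsto_nhdsWithin_iff.mpr ⟨hx, ?_⟩
    filter_upwards [hxpos] with n hn
    exact ne_of_gt hn
  have hfac1 : Tendsto (fun n => (γ n / Real.sqrt (k n)) /
      (Real.exp (γ n / Real.sqrt (k n)) - 1)) atTop (nhds 1) :=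
    slope_exp_limit.comp hxne
  have hbot : Tendsto (fun n => γ n / Real.sqrt (k n) - Real.sqrt (k n) * γ n) atTop atBot :=
    hx.add_atBot (tendsto_neg_atBot_iff.mpr hkγ) |>.congr fun n => by ring
  have hfac2 : Tendsto (fun n => Real.exp (γ n / Real.sqrt (k n) - Real.sqrt (k n) * γ n))
      atTop (nhds 0) := Real.tendsto_exp_atBot.comp hbot
  -- the simplified expression tends to 0
  have hg : Tendsto (fun n => (γ n / Real.sqrt (k n)) /
      (Real.exp (γ n / Real.sqrt (k n)) - 1) *
      (1 - Real.exp (γ n / Real.sqrt (k n) - Real.sqrt (k n) * γ n)) - 1) atTop (nhds 0) := by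
    have := (hfac1.mul ((tendsto_const_nhds : Filter.Tendsto (fun _ : ℕ => (1:ℝ)) Filter.atTop (nhds 1)).sub hfac2)).sub (tendsto_const_nhds : Filter.Tendsto (fun _ : ℕ => (1:ℝ)) Filter.atTop (nhds 1))
    simpa using this
  refine hg.congr' ?_
  filter_upwards [hk2] with n hn
  set x : ℝ := γ n / Real.sqrt (k n) with hxdef
  set s : ℝ := Real.sqrt (k n) with hsdef
  have hkpos : (0:ℝ) < (k n : ℝ) := by exact_mod_cast Nat.lt_of_lt_of_le Nat.zero_lt_two hn
  have hspos : 0 < s := Real.sqrt_pos.mpr hkpos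
  have hss : s * s = (k n : ℝ) := Real.mul_self_sqrt (le_of_lt hkpos)
  have hxp : 0 < x := div_pos (hγpos n) hspos
  have hA1 : 1 < Real.exp x := by
    rw [← Real.exp_zero]; exact Real.exp_lt_exp.mpr hxp
  have hAne : Real.exp x - 1 ≠ 0 := sub_ne_zero.mpr (ne_of_gt hA1)
  have hmx : (k n : ℝ) * x = s * γ n := by
    rw [hxdef, ← hss]; field_simp
  -- sum identity
  have hsum : (∑ j ∈ Finset.Icc 1 (k n - 1), Real.exp (j * γ n / Real.sqrt (k n)))
      = (Real.exp (s * γ n) - Real.exp x) / (Real.exp x - 1) := by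
    have h1 : ∀ j : ℕ, Real.exp (j * γ n / Real.sqrt (k n)) = Real.exp x ^ j := by
      intro j
      rw [← Real.exp_nat_mul, hxdef]
      ring_nf
      rfl
    have hIcc : Finset.Icc 1 (k n - 1) = Finset.Ico 1 (k n) := by
      rw [← Finset.Ico_add_one_right_eq_Icc]; congr 1; omega
    rw [hIcc]
    simp only [h1]
    rw [Finset.sum_Ico_eq_sub _ (Nat.one_le_iff_ne_zero.mpr (by omega)), geom_sum_eq (ne_of_gt hA1)]
    rw [← Real.exp_nat_mul, hmx]
    field_simp
    rw [Finset.sum_range_one, pow_zero]; ring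
  rw [hsum]
  have hBpos : 0 < Real.exp (s * γ n) := Real.exp_pos _
  have hexpsub : Real.exp (x - s * γ n) = Real.exp x / Real.exp (s * γ n) := Real.exp_sub _ _
  have hnegexp : Real.exp (-s * γ n) = (Real.exp (s * γ n))⁻¹ := by
    rw [neg_mul, Real.exp_neg]
  have hsg : Real.sqrt (k n) / γ n = x⁻¹ := by
    rw [hxdef, inv_div]
  rw [hexpsub, hnegexp, hsg]
  field_simp
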